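/- For any sequence of positive integers X = ⟨n₁,...,n_r⟩ summing to n, the entropy satisfies (r−1)·log₂(n) ≤ n·H(X). -/

import Mathlib

open Real Finset

lemma chord_lemma (N x : ℝ) (hN : 2 ≤ N) (hx1 : 1 ≤ x) (hxN : x ≤ N) :
    (N - x) / (N - 1) * Real.log N ≤ x * Real.log (N / x) := by
  have hN1 : (0:ℝ) < N - 1 := by linarith
  set l : ℝ := (N - x) / (N - 1) with hl
  set m : ℝ := (x - 1) / (N - 1) with hm
  have hx0 : (0:ℝ) < x := by linarith
  have hl0 : 0 ≤ l := by apply div_nonneg <;> linarith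
  have hm0 : 0 ≤ m := by apply div_nonneg <;> linarith
  have hlm : l + m = 1 := by rw [hl, hm]; field_simp; ring
  have hcomb : l + m * N = x := by rw [hl, hm]; field_simp; ring
  have key := Real.convexOn_mul_log.2 (Set.mem_Ici.2 (zero_le_one)) (Set.mem_Ici.2 (by linarith : (0:ℝ) ≤ N)) hl0 hm0 hlm
  simp only [smul_eq_mul, mul_one, Real.log_one, mul_zero, zero_add] at key
  rw [hcomb] at key
  have hlog : Real.log (N / x) = Real.log N - Real.log x :=
    Real.log_div (by linarith) (ne_of_gt hx0)
  rw [hlog]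
  have h1 : l * Real.log N = x * Real.log N - m * (N * Real.log N) := by
    rw [hl, hm]; field_simp; ring
  have h2 : x * (Real.log N - Real.log x) = x * Real.log N - x * Real.log x := by ring
  linarith [key]

theorem log_lower_bound_entropy (r n : ℕ) (hr : 1 ≤ r) (ns : Fin r → ℕ)
    (hpos : ∀ i, 0 < ns i) (hsum : ∑ i, ns i = n) :
    ((r : ℝ) - 1) * Real.logb 2 n
      ≤ (n : ℝ) * (∑ i, ((ns i : ℝ) / n) * Real.logb 2 ((n : ℝ) / ns i)) := by
  have hrn : r ≤ n := by
    calc r = ∑ _i : Fin r, 1 := by simp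
    _ ≤ ∑ i, ns i := Finset.sum_le_sum fun i _ => hpos i
    _ = n := hsum
  have hn1 : 1 ≤ n := le_trans hr hrn
  have hn0 : (0:ℝ) < n := by exact_mod_cast hn1
  have hle : ∀ i, (ns i : ℝ) ≤ n := by
    intro i
    exact_mod_cast hsum ▸ Finset.single_le_sum (f := fun i => ns i) (fun i _ => Nat.zero_le _) (Finset.mem_univ i)
  -- simplify RHS
  have hRHS : (n : ℝ) * (∑ i, ((ns i : ℝ) / n) * Real.logb 2 ((n : ℝ) / ns i))
      = ∑ i, (ns i : ℝ) * Real.logb 2 ((n : ℝ) / ns i) := by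
    rw [Finset.mul_sum]
    refine Finset.sum_congr rfl fun i _ => ?_
    field_simp
  rw [hRHS]
  rcases eq_or_lt_of_le hr with h1 | h2
  · -- r = 1
    have h0 : ((r:ℝ) - 1) = 0 := by rw [← h1]; norm_num
    rw [h0, zero_mul]
    apply Finset.sum_nonneg
    intro i _
    apply mul_nonneg (by positivity)
    apply Real.logb_nonneg one_lt_two
    rw [le_div_iff₀ (by exact_mod_cast hpos i)]
    simpa using hle i
  · -- r ≥ 2, so n ≥ 2
    have hn2 : (2:ℝ) ≤ n := by
      have : 2 ≤ n := le_trans h2 hrn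
      exact_mod_cast this
    have hlog2 : (0:ℝ) < Real.log 2 := Real.log_pos one_lt_two
    simp only [Real.logb]
    have hsum' : ∑ i, (ns i : ℝ) * (Real.log ((n:ℝ) / ns i) / Real.log 2)
        = (∑ i, (ns i : ℝ) * Real.log ((n:ℝ) / ns i)) / Real.log 2 := by
      rw [Finset.sum_div]
      exact Finset.sum_congr rfl fun i _ => (mul_div_assoc _ _ _).symm
    rw [hsum', mul_div_assoc' _ _ _]
    rw [div_le_div_iff_of_pos_right hlog2]
    -- key inequality
    calc ((r:ℝ) - 1) * Real.log n
        ≤ ((r:ℝ) * n - n) / (n - 1) * Real.log n := by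
          apply mul_le_mul_of_nonneg_right _ (Real.log_nonneg (by linarith))
          rw [le_div_iff₀ (by linarith : (0:ℝ) < (n:ℝ) - 1)]
          have hr1 : (1:ℝ) ≤ r := by exact_mod_cast hr
          nlinarith
      _ = ∑ i, ((n:ℝ) - ns i) / ((n:ℝ) - 1) * Real.log n := by
          rw [← Finset.sum_mul, ← Finset.sum_div, Finset.sum_sub_distrib]
          have hc : ∑ i : Fin r, ((ns i : ℝ)) = n := by exact_mod_cast hsum
          rw [hc]
          simp [Finset.sum_const, mul_comm]
      _ ≤ ∑ i, (ns i : ℝ) * Real.log ((n:ℝ) / ns i) := by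
          apply Finset.sum_le_sum
          intro i _
          exact chord_lemma _ _ hn2 (by exact_mod_cast hpos i) (hle i)
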